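/- Let 1 ≤ r < ω and let μ be an infinite cardinal. If A is a set of cardinality ℶ_{r−1}(μ), then the symmetric shift graph Sh_r^{sym}(A) has a proper coloring with colors in a set of cardinality μ; in particular its chromatic number is at most μ. -/

import Mathlib

open Cardinal

/-- `t` is the shift of `s`: `s_i = t_{i-1}` for all `1 ≤ i ≤ r-1`. -/
def IsShiftOf {A : Type} {r : ℕ} (s t : Fin r → A) : Prop :=
  ∀ (i : ℕ) (h : i + 1 < r), s ⟨i + 1, h⟩ = t ⟨i, Nat.lt_of_succ_lt h⟩

/-- The shift graph `Sh_r(A)` on a linear order `A`: vertices are strictly increasing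
`r`-tuples from `A`, and distinct vertices `s, t` are adjacent iff one is the shift
of the other. -/
def ShiftGraph (A : Type) [LinearOrder A] (r : ℕ) :
    SimpleGraph {s : Fin r → A // StrictMono s} where
  Adj s t := s ≠ t ∧ (IsShiftOf s.1 t.1 ∨ IsShiftOf t.1 s.1)
  symm := by
    constructor
    rintro s t ⟨hne, h⟩
    exact ⟨hne.symm, h.symm⟩
  loopless := by
    constructor
    rintro s ⟨hne, -⟩
    exact hne rfl

/-- The symmetric shift graph `Sh_r^sym(A)` on a set `A`: vertices are `r`-tuples of
pairwise distinct elements of `A`, and distinct vertices `s, t` are adjacent iff one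
is the shift of the other. -/
def SymShiftGraph (A : Type) (r : ℕ) :
    SimpleGraph {s : Fin r → A // Function.Injective s} where
  Adj s t := s ≠ t ∧ (IsShiftOf s.1 t.1 ∨ IsShiftOf t.1 s.1)
  symm := by
    constructor
    rintro s t ⟨hne, h⟩
    exact ⟨hne.symm, h.symm⟩
  loopless := by
    constructor
    rintro s ⟨hne, -⟩
    exact hne rfl

/-- Iterated beth: `iterBeth μ 0 = μ` and `iterBeth μ (k+1) = 2 ^ iterBeth μ k`. -/
def iterBeth (μ : Cardinal) : ℕ → Cardinal
  | 0 => μ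
  | k + 1 => 2 ^ iterBeth μ k


open Classical in
noncomputable def dpt {B : Type} (a b : B → Prop) : Option B :=
  if h : a = b then none else some (Classical.choose (Function.ne_iff.mp h))

lemma dpt_none {B : Type} {a b : B → Prop} (h : dpt a b = none) : a = b := by
  unfold dpt at h
  split at h
  · assumption
  · simp at h

lemma dpt_some {B : Type} {a b : B → Prop} {x : B} (h : dpt a b = some x) : a x ≠ b x := by
  unfold dpt at h
  split at h
  · simp at h
  · next hne =>
    obtain rfl : Classical.choose (Function.ne_iff.mp hne) = x := by simpa using h
    exact Classical.choose_spec (Function.ne_iff.mp hne)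

lemma const_of {X : Type} {m : ℕ} (f : Fin (m+1) → X)
    (h : ∀ i (hi : i+1 < m+1), f ⟨i+1, hi⟩ = f ⟨i, Nat.lt_of_succ_lt hi⟩) :
    ∀ i : Fin (m+1), f i = f ⟨0, Nat.succ_pos m⟩ := by
  rintro ⟨v, hv⟩
  induction v with
  | zero => rfl
  | succ k ih => rw [h k hv]; exact ih (Nat.lt_of_succ_lt hv)

lemma aleph0_le_iterBeth (μ : Cardinal) (hμ : ℵ₀ ≤ μ) (n : ℕ) : ℵ₀ ≤ iterBeth μ n := by
  induction n with
  | zero => exact hμ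
  | succ k ih => exact ih.trans (Cardinal.cantor _).le

lemma key (n : ℕ) : ∀ (μ : Cardinal), ℵ₀ ≤ μ → ∀ (A : Type), #A = iterBeth μ n →
    ∃ (C : Type) (c : (Fin (n+1) → A) → C), #C = μ ∧
      ∀ s t : Fin (n+1) → A, s ≠ t → IsShiftOf s t → c s ≠ c t := by
  induction n with
  | zero =>
    intro μ hμ A hA
    refine ⟨A, fun s => s ⟨0, Nat.one_pos⟩, hA, ?_⟩
    intro s t hne _ hc
    exact hne (funext fun i => by
      have : i = ⟨0, Nat.one_pos⟩ := Fin.ext (Nat.lt_one_iff.mp i.2)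
      rw [this]; exact hc)
  | succ n ih =>
    intro μ hμ A hA
    set B := (iterBeth μ n).out with hBdef
    have hB : #B = iterBeth μ n := Cardinal.mk_out _
    have hBinf : ℵ₀ ≤ #B := by rw [hB]; exact aleph0_le_iterBeth μ hμ n
    have hAe : #A = #(B → Prop) := by
      rw [hA, show #(B → Prop) = 2 ^ #B from Cardinal.mk_set, hB]; rfl
    obtain ⟨e⟩ := Cardinal.eq.mp hAe
    have hOB : #(Option B) = iterBeth μ n := by
      rw [Cardinal.mk_option, Cardinal.add_one_eq hBinf, hB]
    obtain ⟨C', c', hC', hprop⟩ := ih μ hμ (Option B) hOB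
    let δ : (Fin (n+2) → A) → Fin (n+1) → Option B := fun s i =>
      dpt (e (s ⟨i.1, Nat.lt_succ_of_lt i.2⟩)) (e (s ⟨i.1+1, Nat.succ_lt_succ i.2⟩))
    refine ⟨C' × Prop,
      fun s => (c' (δ s), ∃ x, δ s ⟨0, Nat.succ_pos n⟩ = some x ∧ e (s ⟨0, Nat.succ_pos (n+1)⟩) x),
      ?_, ?_⟩
    · rw [show #(C' × Prop) = #C' * 2 by simp [Cardinal.mk_Prop], hC']
      exact Cardinal.mul_eq_left hμ (le_trans (by exact_mod_cast (Cardinal.nat_lt_aleph0 2).le) hμ) two_ne_zero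
    · intro s t hne hshift hceq
      have h1 : c' (δ s) = c' (δ t) := congrArg Prod.fst hceq
      have h2 : (∃ x, δ s ⟨0, Nat.succ_pos n⟩ = some x ∧ e (s ⟨0, Nat.succ_pos (n+1)⟩) x) =
          (∃ x, δ t ⟨0, Nat.succ_pos n⟩ = some x ∧ e (t ⟨0, Nat.succ_pos (n+1)⟩) x) :=
        congrArg Prod.snd hceq
      have hδshift : IsShiftOf (δ s) (δ t) := by
        intro i hi
        show dpt (e (s ⟨i+1, Nat.succ_lt_succ (Nat.lt_of_succ_lt hi)⟩))
              (e (s ⟨i+2, Nat.succ_lt_succ hi⟩)) =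
            dpt (e (t ⟨i, Nat.lt_succ_of_lt (Nat.lt_of_succ_lt hi)⟩))
              (e (t ⟨i+1, Nat.succ_lt_succ (Nat.lt_of_succ_lt hi)⟩))
        rw [hshift i (Nat.succ_lt_succ (Nat.lt_of_succ_lt hi)),
            hshift (i+1) (Nat.succ_lt_succ hi)]
      by_cases hδ : δ s = δ t
      · have hconst : ∀ i : Fin (n+1), δ s i = δ s ⟨0, Nat.succ_pos n⟩ :=
          const_of (δ s) (fun i hi => (hδshift i hi).trans (congrFun hδ.symm _))
        cases h0 : δ s ⟨0, Nat.succ_pos n⟩ with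
        | none =>
          have hsc : ∀ i (hi : i+1 < n+2), s ⟨i+1, hi⟩ = s ⟨i, Nat.lt_of_succ_lt hi⟩ := by
            intro i hi
            have hd : δ s ⟨i, Nat.lt_of_succ_lt_succ hi⟩ = none :=
              (hconst ⟨i, Nat.lt_of_succ_lt_succ hi⟩).trans h0
            exact (e.injective (dpt_none hd)).symm
          have htc : ∀ i (hi : i+1 < n+2), t ⟨i+1, hi⟩ = t ⟨i, Nat.lt_of_succ_lt hi⟩ := by
            intro i hi
            have hd : δ t ⟨i, Nat.lt_of_succ_lt_succ hi⟩ = none := by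
              rw [← hδ]; exact (hconst ⟨i, Nat.lt_of_succ_lt_succ hi⟩).trans h0
            exact (e.injective (dpt_none hd)).symm
          have hs0 : ∀ i : Fin (n+2), s i = s ⟨0, Nat.succ_pos (n+1)⟩ := const_of s hsc
          have ht0 : ∀ i : Fin (n+2), t i = t ⟨0, Nat.succ_pos (n+1)⟩ := const_of t htc
          refine hne (funext fun i => ?_)
          rw [hs0 i, ht0 i, ← hshift 0 (Nat.succ_lt_succ (Nat.succ_pos n)),
            hs0 ⟨1, Nat.succ_lt_succ (Nat.succ_pos n)⟩]
        | some x =>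
          have hx : e (s ⟨0, Nat.succ_pos (n+1)⟩) x ≠
              e (s ⟨1, Nat.succ_lt_succ (Nat.succ_pos n)⟩) x := dpt_some h0
          have ht0 : δ t ⟨0, Nat.succ_pos n⟩ = some x := by rw [← hδ]; exact h0
          have hms : (∃ y, δ s ⟨0, Nat.succ_pos n⟩ = some y ∧ e (s ⟨0, Nat.succ_pos (n+1)⟩) y) ↔
              e (s ⟨0, Nat.succ_pos (n+1)⟩) x := by
            constructor
            · rintro ⟨y, hy, hey⟩
              obtain rfl : y = x := (Option.some_inj.mp (h0.symm.trans hy)).symm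
              exact hey
            · intro h; exact ⟨x, h0, h⟩
          have hmt : (∃ y, δ t ⟨0, Nat.succ_pos n⟩ = some y ∧ e (t ⟨0, Nat.succ_pos (n+1)⟩) y) ↔
              e (t ⟨0, Nat.succ_pos (n+1)⟩) x := by
            constructor
            · rintro ⟨y, hy, hey⟩
              obtain rfl : y = x := (Option.some_inj.mp (ht0.symm.trans hy)).symm
              exact hey
            · intro h; exact ⟨x, ht0, h⟩
          have hiff : e (s ⟨0, Nat.succ_pos (n+1)⟩) x ↔ e (t ⟨0, Nat.succ_pos (n+1)⟩) x :=
            hms.symm.trans ((iff_of_eq h2).trans hmt)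
          rw [← hshift 0 (Nat.succ_lt_succ (Nat.succ_pos n))] at hiff
          exact hx (propext hiff)
      · exact hprop (δ s) (δ t) hδ hδshift h1

theorem stmt_14 (r : ℕ) (hr : 1 ≤ r) (μ : Cardinal) (hμ : ℵ₀ ≤ μ)
    (A : Type) (hA : #A = iterBeth μ (r - 1)) :
    ∃ (C : Type) (c : {s : Fin r → A // Function.Injective s} → C), #C = μ ∧
      ∀ x y : {s : Fin r → A // Function.Injective s},
        (SymShiftGraph A r).Adj x y → c x ≠ c y := by
  obtain ⟨n, rfl⟩ : ∃ n, r = n + 1 := ⟨r - 1, (Nat.succ_pred_eq_of_pos hr).symm⟩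
  simp only [Nat.add_sub_cancel] at hA
  obtain ⟨C, c, hC, hprop⟩ := key n μ hμ A hA
  refine ⟨C, fun x => c x.1, hC, ?_⟩
  rintro x y ⟨hne, h | h⟩
  · exact hprop x.1 y.1 (fun hh => hne (Subtype.ext hh)) h
  · exact (hprop y.1 x.1 (fun hh => hne (Subtype.ext hh.symm)) h).symm
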